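/- Let D ≥ 1 be an integer, E = ℂ^D with canonical basis (e_k), (θ^k) the dual basis of E*, and let R_P ⊂ E^{⊗3} be the span of the Knuth relation tensors. Under the canonical identification of (E^{⊗3})* with (E*)^{⊗3}, the annihilator R_P^⊥ = {ω ∈ (E*)^{⊗3} : ω(r) = 0 for all r ∈ R_P} equals the linear span of the elements θ^j⊗θ^k⊗θ^i + θ^j⊗θ^i⊗θ^k for i < j ≤ k, θ^i⊗θ^k⊗θ^j + θ^k⊗θ^i⊗θ^j for i ≤ j < k, θ^i⊗θ^j⊗θ^k for i ≤ j ≤ k, and θ^k⊗θ^j⊗θ^i for i < j < k (indices in {1,…,D}). -/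

import Mathlib

set_option maxSynthPendingDepth 5
set_option maxRecDepth 8000

open TensorProduct

/-- The canonical basis vector `e_k` of `ℂ^D`. -/
noncomputable def stdBasis (D : ℕ) (k : Fin D) : Fin D → ℂ := Pi.single k 1

/-- The dual basis functional `θ^k` on `ℂ^D`, with `θ^k(e_ℓ) = δ_{kℓ}`. -/
noncomputable def dualBasisFun (D : ℕ) (k : Fin D) : Module.Dual ℂ (Fin D → ℂ) :=
  LinearMap.proj k

/-- The relation space `R_P ⊂ (ℂ^D)^{⊗3}` of the plactic algebra: the span of the Knuth
relation tensors `e_ℓ⊗e_m⊗e_k - e_ℓ⊗e_k⊗e_m` for `k < ℓ ≤ m` and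
`e_k⊗e_m⊗e_ℓ - e_m⊗e_k⊗e_ℓ` for `k ≤ ℓ < m`. -/
noncomputable def placticRelations (D : ℕ) :
    Submodule ℂ ((Fin D → ℂ) ⊗[ℂ] ((Fin D → ℂ) ⊗[ℂ] (Fin D → ℂ))) :=
  Submodule.span ℂ
    ({t | ∃ k l m : Fin D, k < l ∧ l ≤ m ∧
        t = stdBasis D l ⊗ₜ[ℂ] (stdBasis D m ⊗ₜ[ℂ] stdBasis D k)
            - stdBasis D l ⊗ₜ[ℂ] (stdBasis D k ⊗ₜ[ℂ] stdBasis D m)} ∪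
      {t | ∃ k l m : Fin D, k ≤ l ∧ l < m ∧
        t = stdBasis D k ⊗ₜ[ℂ] (stdBasis D m ⊗ₜ[ℂ] stdBasis D l)
            - stdBasis D m ⊗ₜ[ℂ] (stdBasis D k ⊗ₜ[ℂ] stdBasis D l)})

/-- The canonical pairing map `(E*)^{⊗3} → (E^{⊗3})*` for `E = ℂ^D`, sending `α⊗β⊗γ` to the
functional `x⊗y⊗z ↦ α(x)β(y)γ(z)`. -/
noncomputable def tripleDualPairing (D : ℕ) :
    (Module.Dual ℂ (Fin D → ℂ) ⊗[ℂ]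
        (Module.Dual ℂ (Fin D → ℂ) ⊗[ℂ] Module.Dual ℂ (Fin D → ℂ))) →ₗ[ℂ]
      Module.Dual ℂ ((Fin D → ℂ) ⊗[ℂ] ((Fin D → ℂ) ⊗[ℂ] (Fin D → ℂ))) :=
  (TensorProduct.dualDistrib ℂ (Fin D → ℂ) ((Fin D → ℂ) ⊗[ℂ] (Fin D → ℂ))).comp
    ((TensorProduct.dualDistrib ℂ (Fin D → ℂ) (Fin D → ℂ)).lTensor
      (Module.Dual ℂ (Fin D → ℂ)))


noncomputable def eBasis (D : ℕ) : Module.Basis (Fin D) ℂ (Fin D → ℂ) := Pi.basisFun ℂ (Fin D)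

noncomputable def dBasis (D : ℕ) : Module.Basis (Fin D) ℂ (Module.Dual ℂ (Fin D → ℂ)) :=
  (eBasis D).dualBasis

lemma dualBasisFun_eq (D : ℕ) (k : Fin D) : dualBasisFun D k = dBasis D k := by
  apply LinearMap.ext; intro x
  simp [dualBasisFun, dBasis, eBasis, Module.Basis.coe_dualBasis, Module.Basis.coord_apply]

noncomputable def B3 (D : ℕ) :
    Module.Basis (Fin D × (Fin D × Fin D)) ℂ
      (Module.Dual ℂ (Fin D → ℂ) ⊗[ℂ]
        (Module.Dual ℂ (Fin D → ℂ) ⊗[ℂ] Module.Dual ℂ (Fin D → ℂ))) :=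
  (dBasis D).tensorProduct ((dBasis D).tensorProduct (dBasis D))

lemma B3_apply (D : ℕ) (a b c : Fin D) :
    B3 D (a, (b, c)) = dualBasisFun D a ⊗ₜ[ℂ] (dualBasisFun D b ⊗ₜ[ℂ] dualBasisFun D c) := by
  simp [B3, Module.Basis.tensorProduct_apply', dualBasisFun_eq]

lemma pairing_apply (D : ℕ) (a b c x y z : Fin D) :
    tripleDualPairing D (dualBasisFun D a ⊗ₜ[ℂ] (dualBasisFun D b ⊗ₜ[ℂ] dualBasisFun D c))
      (stdBasis D x ⊗ₜ[ℂ] (stdBasis D y ⊗ₜ[ℂ] stdBasis D z)) =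
    (if a = x then 1 else 0) * ((if b = y then 1 else 0) * (if c = z then 1 else 0)) := by
  simp [tripleDualPairing, TensorProduct.dualDistrib_apply, dualBasisFun, stdBasis,
    Pi.single_apply]

lemma pairing_apply' (D : ℕ) (a b c x y z : Fin D) :
    tripleDualPairing D (dualBasisFun D a ⊗ₜ[ℂ] (dualBasisFun D b ⊗ₜ[ℂ] dualBasisFun D c))
      (stdBasis D x ⊗ₜ[ℂ] (stdBasis D y ⊗ₜ[ℂ] stdBasis D z)) =
    if a = x ∧ b = y ∧ c = z then 1 else 0 := by
  rw [pairing_apply]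
  by_cases h1 : a = x <;> by_cases h2 : b = y <;> by_cases h3 : c = z <;> simp [h1, h2, h3]

lemma repr_eq (D : ℕ)
    (ω : Module.Dual ℂ (Fin D → ℂ) ⊗[ℂ]
        (Module.Dual ℂ (Fin D → ℂ) ⊗[ℂ] Module.Dual ℂ (Fin D → ℂ)))
    (x y z : Fin D) :
    (B3 D).repr ω (x, (y, z)) =
      tripleDualPairing D ω (stdBasis D x ⊗ₜ[ℂ] (stdBasis D y ⊗ₜ[ℂ] stdBasis D z)) := by
  have h : (B3 D).coord (x, (y, z)) =
      (tripleDualPairing D).flip (stdBasis D x ⊗ₜ[ℂ] (stdBasis D y ⊗ₜ[ℂ] stdBasis D z)) := by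
    apply Module.Basis.ext (B3 D)
    rintro ⟨a, b, c⟩
    rw [Module.Basis.coord_apply, Module.Basis.repr_self, LinearMap.flip_apply, B3_apply, pairing_apply,
      Finsupp.single_apply]
    by_cases h1 : a = x <;> by_cases h2 : b = y <;> by_cases h3 : c = z <;>
      simp [h1, h2, h3, Prod.ext_iff]
  have := congrArg (fun g => g ω) h
  simpa [Module.Basis.coord_apply] using this

/-- The Knuth-partner involution on index triples. -/
def sigma3 (D : ℕ) : Fin D × (Fin D × Fin D) → Fin D × (Fin D × Fin D) :=
  fun t =>
    if t.1 ≤ t.2.1 then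
      if t.2.1 ≤ t.2.2 then t
      else if t.2.2 < t.1 then (t.1, (t.2.2, t.2.1)) else (t.2.1, (t.1, t.2.2))
    else
      if t.1 ≤ t.2.2 then (t.1, (t.2.2, t.2.1))
      else if t.2.1 ≤ t.2.2 then (t.2.1, (t.1, t.2.2)) else t

lemma sigma3_invol (D : ℕ) : Function.Involutive (sigma3 D) := by
  rintro ⟨a, b, c⟩
  simp only [sigma3]
  split_ifs <;> simp_all <;> omega


/-- The annihilator of the plactic relation space `R_P` inside `(E*)^{⊗3}` for `E = ℂ^D`
is spanned by `θ^j⊗θ^k⊗θ^i + θ^j⊗θ^i⊗θ^k` for `i < j ≤ k`,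
`θ^i⊗θ^k⊗θ^j + θ^k⊗θ^i⊗θ^j` for `i ≤ j < k`, `θ^i⊗θ^j⊗θ^k` for `i ≤ j ≤ k`, and
`θ^k⊗θ^j⊗θ^i` for `i < j < k`. -/
theorem annihilator_placticRelations (D : ℕ) (hD : 1 ≤ D) :
    Submodule.comap (tripleDualPairing D) (placticRelations D).dualAnnihilator =
      Submodule.span ℂ
        ({ω | ∃ i j k : Fin D, i < j ∧ j ≤ k ∧
            ω = dualBasisFun D j ⊗ₜ[ℂ] (dualBasisFun D k ⊗ₜ[ℂ] dualBasisFun D i)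
                + dualBasisFun D j ⊗ₜ[ℂ] (dualBasisFun D i ⊗ₜ[ℂ] dualBasisFun D k)} ∪
          {ω | ∃ i j k : Fin D, i ≤ j ∧ j < k ∧
            ω = dualBasisFun D i ⊗ₜ[ℂ] (dualBasisFun D k ⊗ₜ[ℂ] dualBasisFun D j)
                + dualBasisFun D k ⊗ₜ[ℂ] (dualBasisFun D i ⊗ₜ[ℂ] dualBasisFun D j)} ∪
          {ω | ∃ i j k : Fin D, i ≤ j ∧ j ≤ k ∧
            ω = dualBasisFun D i ⊗ₜ[ℂ] (dualBasisFun D j ⊗ₜ[ℂ] dualBasisFun D k)} ∪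
          {ω | ∃ i j k : Fin D, i < j ∧ j < k ∧
            ω = dualBasisFun D k ⊗ₜ[ℂ] (dualBasisFun D j ⊗ₜ[ℂ] dualBasisFun D i)}) := by
  classical
  apply le_antisymm
  · -- hard direction: annihilator ⊆ span
    intro ω hω
    rw [Submodule.mem_comap, Submodule.mem_dualAnnihilator] at hω
    set f : Fin D × (Fin D × Fin D) → ℂ := fun t => (B3 D).repr ω t with hf
    have key1 : ∀ a b c : Fin D, c < a → a ≤ b → f (a, (b, c)) = f (a, (c, b)) := by
      intro a b c h1 h2
      have hmem : stdBasis D a ⊗ₜ[ℂ] (stdBasis D b ⊗ₜ[ℂ] stdBasis D c)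
          - stdBasis D a ⊗ₜ[ℂ] (stdBasis D c ⊗ₜ[ℂ] stdBasis D b) ∈ placticRelations D :=
        Submodule.subset_span (Or.inl ⟨c, a, b, h1, h2, rfl⟩)
      have h0 := hω _ hmem
      rw [map_sub] at h0
      simp only [hf, repr_eq]
      exact sub_eq_zero.mp h0
    have key2 : ∀ a b c : Fin D, a ≤ c → c < b → f (a, (b, c)) = f (b, (a, c)) := by
      intro a b c h1 h2
      have hmem : stdBasis D a ⊗ₜ[ℂ] (stdBasis D b ⊗ₜ[ℂ] stdBasis D c)
          - stdBasis D b ⊗ₜ[ℂ] (stdBasis D a ⊗ₜ[ℂ] stdBasis D c) ∈ placticRelations D :=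
        Submodule.subset_span (Or.inr ⟨a, c, b, h1, h2, rfl⟩)
      have h0 := hω _ hmem
      rw [map_sub] at h0
      simp only [hf, repr_eq]
      exact sub_eq_zero.mp h0
    have hfσ : ∀ t, f (sigma3 D t) = f t := by
      rintro ⟨a, b, c⟩
      simp only [sigma3]
      split_ifs with h1 h2 h3 h4 h5
      · rfl
      · exact (key1 a b c h3 h1).symm
      · exact (key2 a b c (by omega) (by omega)).symm
      · exact key1 a c b (by omega) h4
      · exact key2 b a c h5 (by omega)
      · rfl
    have hmemS : ∀ t, B3 D t + B3 D (sigma3 D t) ∈ Submodule.span ℂ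
        ({ω | ∃ i j k : Fin D, i < j ∧ j ≤ k ∧
            ω = dualBasisFun D j ⊗ₜ[ℂ] (dualBasisFun D k ⊗ₜ[ℂ] dualBasisFun D i)
                + dualBasisFun D j ⊗ₜ[ℂ] (dualBasisFun D i ⊗ₜ[ℂ] dualBasisFun D k)} ∪
          {ω | ∃ i j k : Fin D, i ≤ j ∧ j < k ∧
            ω = dualBasisFun D i ⊗ₜ[ℂ] (dualBasisFun D k ⊗ₜ[ℂ] dualBasisFun D j)
                + dualBasisFun D k ⊗ₜ[ℂ] (dualBasisFun D i ⊗ₜ[ℂ] dualBasisFun D j)} ∪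
          {ω | ∃ i j k : Fin D, i ≤ j ∧ j ≤ k ∧
            ω = dualBasisFun D i ⊗ₜ[ℂ] (dualBasisFun D j ⊗ₜ[ℂ] dualBasisFun D k)} ∪
          {ω | ∃ i j k : Fin D, i < j ∧ j < k ∧
            ω = dualBasisFun D k ⊗ₜ[ℂ] (dualBasisFun D j ⊗ₜ[ℂ] dualBasisFun D i)}) := by
      rintro ⟨a, b, c⟩
      simp only [sigma3]
      split_ifs with h1 h2 h3 h4 h5
      · refine Submodule.add_mem _ ?_ ?_ <;>
          exact Submodule.subset_span
            (Or.inl (Or.inr ⟨a, b, c, h1, h2, B3_apply D a b c⟩))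
      · exact Submodule.subset_span
          (Or.inl (Or.inl (Or.inl ⟨c, a, b, h3, h1, by rw [B3_apply, B3_apply]⟩)))
      · exact Submodule.subset_span
          (Or.inl (Or.inl (Or.inr ⟨a, c, b, by omega, by omega, by rw [B3_apply, B3_apply]⟩)))
      · rw [add_comm]
        exact Submodule.subset_span
          (Or.inl (Or.inl (Or.inl ⟨b, a, c, by omega, h4, by rw [B3_apply, B3_apply]⟩)))
      · rw [add_comm]
        exact Submodule.subset_span
          (Or.inl (Or.inl (Or.inr ⟨b, c, a, h5, by omega, by rw [B3_apply, B3_apply]⟩)))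
      · refine Submodule.add_mem _ ?_ ?_ <;>
          exact Submodule.subset_span
            (Or.inr ⟨c, b, a, by omega, by omega, B3_apply D a b c⟩)
    have hsum : ∑ t, f t • B3 D t = ω := (B3 D).sum_repr ω
    have hsum2 : ∑ t, f t • B3 D (sigma3 D t) = ω := by
      rw [← hsum]
      exact Fintype.sum_bijective (sigma3 D) (sigma3_invol D).bijective _ _
        (fun t => by rw [hfσ t])
    have hω2 : ω = (2⁻¹ : ℂ) • ∑ t, f t • (B3 D t + B3 D (sigma3 D t)) := by
      simp only [smul_add, Finset.sum_add_distrib, hsum, hsum2]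
      rw [← add_smul]
      norm_num
    rw [hω2]
    exact Submodule.smul_mem _ _
      (Submodule.sum_mem _ fun t _ => Submodule.smul_mem _ _ (hmemS t))
  · -- easy direction: each generator annihilates the relations
    rw [Submodule.span_le]
    rintro ω0 hω0
    have hker : ∀ r ∈ ({t | ∃ k l m : Fin D, k < l ∧ l ≤ m ∧
        t = stdBasis D l ⊗ₜ[ℂ] (stdBasis D m ⊗ₜ[ℂ] stdBasis D k)
            - stdBasis D l ⊗ₜ[ℂ] (stdBasis D k ⊗ₜ[ℂ] stdBasis D m)} ∪
      {t | ∃ k l m : Fin D, k ≤ l ∧ l < m ∧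
        t = stdBasis D k ⊗ₜ[ℂ] (stdBasis D m ⊗ₜ[ℂ] stdBasis D l)
            - stdBasis D m ⊗ₜ[ℂ] (stdBasis D k ⊗ₜ[ℂ] stdBasis D l)} :
        Set ((Fin D → ℂ) ⊗[ℂ] ((Fin D → ℂ) ⊗[ℂ] (Fin D → ℂ)))),
        tripleDualPairing D ω0 r = 0 := by
      rintro r (⟨x, y, z, hr1, hr2, rfl⟩ | ⟨x, y, z, hr1, hr2, rfl⟩) <;>
        rcases hω0 with (((⟨i, j, k, h1, h2, rfl⟩ | ⟨i, j, k, h1, h2, rfl⟩) |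
          ⟨i, j, k, h1, h2, rfl⟩) | ⟨i, j, k, h1, h2, rfl⟩) <;>
        · simp only [map_add, map_sub, LinearMap.add_apply, pairing_apply']
          split_ifs <;> (try norm_num) <;> omega
    simp only [SetLike.mem_coe, Submodule.mem_comap, Submodule.mem_dualAnnihilator]
    intro w hw
    have hle : placticRelations D ≤ LinearMap.ker (tripleDualPairing D ω0) := by
      rw [placticRelations, Submodule.span_le]
      intro r hr
      simp only [SetLike.mem_coe, LinearMap.mem_ker]
      exact hker r hr
    exact LinearMap.mem_ker.mp (hle hw)
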